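/- Let W_n, W be bounded connected open subsets of ℂ^N with 0 ∈ W_n for all n and 0 ∈ W. If d_H(closure(W_n), closure(W)) → 0 and d_H(∂W_n, ∂W) → 0, then (W_n) converges to W in the kernel sense: for every strictly increasing map σ : ℕ → ℕ, the kernel of the subsequence (W_{σ(n)}) equals W. -/

import Mathlib

open Filter Metric Topology Set

/-- The kernel of a sequence of open sets: the union over `n` of the connected
component containing `0` of the interior of `⋂ k ≥ n, W k`. -/
def seqKernel {X : Type*} [TopologicalSpace X] [Zero X] (W : ℕ → Set X) : Set X :=
  ⋃ n, connectedComponentIn (interior (⋂ k, ⋂ (_ : n ≤ k), W k)) 0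

/-- The thickening of a path-connected set is path-connected. -/
lemma aux_thickening_pathConnected {E : Type*} [NormedAddCommGroup E] [NormedSpace ℝ E]
    {K : Set E} (hK : IsPathConnected K) {r : ℝ} (hr : 0 < r) :
    IsPathConnected (Metric.thickening r K) := by
  obtain ⟨x, hxK, hx⟩ := hK
  refine ⟨x, self_subset_thickening hr _ hxK, fun {y} hy => ?_⟩
  obtain ⟨z, hzK, hyz⟩ := Metric.mem_thickening_iff.mp hy
  have h1 : JoinedIn (Metric.thickening r K) x z :=
    (hx hzK).mono (self_subset_thickening hr _)
  have hball : IsPathConnected (Metric.ball z r) :=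
    (convex_ball z r).isPathConnected ⟨z, Metric.mem_ball_self hr⟩
  have h2 : JoinedIn (Metric.ball z r) z y :=
    hball.joinedIn z (Metric.mem_ball_self hr) y (by simpa [Metric.mem_ball] using hyz)
  exact h1.trans (h2.mono (Metric.ball_subset_thickening hzK r))

/-- A preconnected set disjoint from the frontier of an open set, and meeting it,
is contained in it. -/
lemma aux_subset_of_disjoint_frontier {X : Type*} [TopologicalSpace X] {S A : Set X}
    (hS : IsPreconnected S) (hA : IsOpen A) (hdisj : S ∩ frontier A = ∅)
    (hmeet : (S ∩ A).Nonempty) : S ⊆ A := by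
  apply IsPreconnected.subset_left_of_subset_union hA isClosed_closure.isOpen_compl
    (disjoint_compl_right.mono_left subset_closure) ?_ hmeet hS
  intro x hxS
  by_cases hxA : x ∈ A
  · exact Or.inl hxA
  · refine Or.inr fun hxcl => ?_
    have : x ∈ S ∩ frontier A := ⟨hxS, by rw [hA.frontier_eq]; exact ⟨hxcl, hxA⟩⟩
    rw [hdisj] at this
    exact this

/-- In a nontrivial normed space, a nonempty bounded set has nonempty frontier. -/
lemma aux_frontier_nonempty {E : Type*} [NormedAddCommGroup E] [NormedSpace ℝ E] [Nontrivial E]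
    {S : Set E} (hS : S.Nonempty) (hbdd : Bornology.IsBounded S) : (frontier S).Nonempty := by
  by_contra h
  rw [not_nonempty_iff_eq_empty] at h
  rcases isClopen_iff.mp (isClopen_iff_frontier_eq_empty.mpr h) with h' | h'
  · exact hS.ne_empty h'
  · exact NormedSpace.unbounded_univ ℝ E (h' ▸ hbdd)

/-- If bounded connected open sets `W n` (containing `0`) converge to a bounded
connected open set `W₀` (containing `0`) in the Hausdorff sense, then `(W n)`
converges to `W₀` in the kernel sense: every subsequence has kernel `W₀`. -/
theorem kernel_convergence_of_hausdorff_convergence (N : ℕ)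
    (W : ℕ → Set (EuclideanSpace ℂ (Fin N))) (W₀ : Set (EuclideanSpace ℂ (Fin N)))
    (hWopen : ∀ n, IsOpen (W n)) (hWconn : ∀ n, IsConnected (W n))
    (hWbdd : ∀ n, Bornology.IsBounded (W n))
    (h0 : ∀ n, (0 : EuclideanSpace ℂ (Fin N)) ∈ W n)
    (hW₀open : IsOpen W₀) (hW₀conn : IsConnected W₀)
    (hW₀bdd : Bornology.IsBounded W₀)
    (h0W₀ : (0 : EuclideanSpace ℂ (Fin N)) ∈ W₀)
    (hcl : Tendsto (fun n => hausdorffDist (closure (W n)) (closure W₀)) atTop (nhds 0))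
    (hbd : Tendsto (fun n => hausdorffDist (frontier (W n)) (frontier W₀)) atTop (nhds 0)) :
    ∀ σ : ℕ → ℕ, StrictMono σ → seqKernel (fun k => W (σ k)) = W₀ := by
  intro σ hσ
  rcases subsingleton_or_nontrivial (EuclideanSpace ℂ (Fin N)) with hsub | hnt
  · -- Degenerate case: the space is a single point.
    have hW₀u : W₀ = univ := eq_univ_of_forall fun x => (Subsingleton.elim 0 x) ▸ h0W₀
    rw [hW₀u]
    apply eq_univ_of_forall
    intro x
    refine mem_iUnion.mpr ⟨0, ?_⟩
    have hT : (⋂ k, ⋂ (_ : (0:ℕ) ≤ k), W (σ k)) = univ :=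
      eq_univ_of_forall fun y => mem_iInter₂.mpr fun k _ => (Subsingleton.elim 0 y) ▸ h0 (σ k)
    rw [hT, interior_univ]
    have hx0 : x = 0 := Subsingleton.elim x 0
    rw [hx0]
    exact mem_connectedComponentIn (mem_univ 0)
  -- Main case.
  have hσt : Tendsto σ atTop atTop := hσ.tendsto_atTop
  have hfr₀ne : (frontier W₀).Nonempty := aux_frontier_nonempty ⟨0, h0W₀⟩ hW₀bdd
  have hfrne : ∀ m, (frontier (W m)).Nonempty := fun m =>
    aux_frontier_nonempty ⟨0, h0 m⟩ (hWbdd m)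
  have hedist : ∀ m, EMetric.hausdorffEdist (frontier (W m)) (frontier W₀) ≠ ⊤ := fun m =>
    hausdorffEdist_ne_top_of_nonempty_of_bounded (hfrne m) hfr₀ne
      ((hWbdd m).closure.subset frontier_subset_closure)
      (hW₀bdd.closure.subset frontier_subset_closure)
  apply Set.Subset.antisymm
  · -- seqKernel ⊆ W₀
    intro z hz
    rcases mem_iUnion.mp hz with ⟨n, hzV⟩
    set T := interior (⋂ k, ⋂ (_ : n ≤ k), W (σ k)) with hT
    set V := connectedComponentIn T 0 with hV
    have hVopen : IsOpen V := isOpen_interior.connectedComponentIn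
    have hVconn : IsPreconnected V := isPreconnected_connectedComponentIn
    have h0V : (0 : EuclideanSpace ℂ (Fin N)) ∈ V :=
      mem_connectedComponentIn (connectedComponentIn_nonempty_iff.mp ⟨z, hzV⟩)
    have hVsub : ∀ k, n ≤ k → V ⊆ W (σ k) := fun k hk =>
      (connectedComponentIn_subset _ _).trans
        (interior_subset.trans (iInter₂_subset k hk))
    by_contra hzW₀
    have hmeet : (V ∩ frontier W₀).Nonempty := by
      by_contra hem
      rw [not_nonempty_iff_eq_empty] at hem
      exact hzW₀ (aux_subset_of_disjoint_frontier hVconn hW₀open hem ⟨0, h0V, h0W₀⟩ hzV)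
    obtain ⟨p, hpV, hpfr⟩ := hmeet
    obtain ⟨r, hr, hball⟩ := Metric.isOpen_iff.mp hVopen p hpV
    obtain ⟨M, hM⟩ := eventually_atTop.mp (hbd.eventually_lt_const hr)
    obtain ⟨K, hK⟩ := eventually_atTop.mp (hσt.eventually_ge_atTop M)
    set k := max n K with hk
    have h1 : hausdorffDist (frontier (W (σ k))) (frontier W₀) < r :=
      hM _ (hK k (le_max_right _ _))
    have h2 : infDist p (frontier (W (σ k))) ≤
        hausdorffDist (frontier (W (σ k))) (frontier W₀) := by
      rw [hausdorffDist_comm]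
      exact infDist_le_hausdorffDist_of_mem hpfr (by rw [EMetric.hausdorffEdist_comm]; exact hedist (σ k))
    obtain ⟨q, hq, hdq⟩ := (infDist_lt_iff (hfrne (σ k))).mp (h2.trans_lt h1)
    have hqW : q ∈ W (σ k) :=
      hVsub k (le_max_left _ _) (hball (by rw [Metric.mem_ball, dist_comm]; exact hdq))
    rw [(hWopen (σ k)).frontier_eq] at hq
    exact hq.2 hqW
  · -- W₀ ⊆ seqKernel
    intro z hz
    have hpc : IsPathConnected W₀ := hW₀open.isConnected_iff_isPathConnected.mp hW₀conn
    obtain ⟨γ, hγ⟩ := hpc.joinedIn 0 h0W₀ z hz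
    set K := γ.extend '' Set.Icc (0:ℝ) 1 with hKdef
    have hKcompact : IsCompact K := isCompact_Icc.image γ.continuous_extend
    have hKsub : K ⊆ W₀ := by
      rintro _ ⟨t, ht, rfl⟩
      rw [γ.extend_apply ht]
      exact hγ _
    have hKpath : IsPathConnected K :=
      ((convex_Icc (0:ℝ) 1).isPathConnected ⟨0, Set.left_mem_Icc.mpr zero_le_one⟩).image
        γ.continuous_extend
    obtain ⟨δ, hδ, hthick⟩ := hKcompact.exists_thickening_subset_open hW₀open hKsub
    set U := Metric.thickening (δ / 2) K with hU
    have hUopen : IsOpen U := isOpen_thickening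
    have hKU : K ⊆ U := self_subset_thickening (by positivity) K
    have hUpath : IsPathConnected U := aux_thickening_pathConnected hKpath (by positivity)
    have h0U : (0 : EuclideanSpace ℂ (Fin N)) ∈ U := hKU ⟨0, Set.left_mem_Icc.mpr zero_le_one, γ.extend_zero⟩
    have hzU : z ∈ U := hKU ⟨1, Set.right_mem_Icc.mpr zero_le_one, γ.extend_one⟩
    have hUdist : ∀ q ∈ U, Metric.ball q (δ / 2) ⊆ W₀ := by
      intro q hq x hx
      apply hthick
      rw [Metric.mem_thickening_iff] at hq ⊢
      obtain ⟨y, hyK, hqy⟩ := hq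
      have hxq : dist x q < δ / 2 := Metric.mem_ball.mp hx
      exact ⟨y, hyK, (dist_triangle x q y).trans_lt (by linarith)⟩
    obtain ⟨M, hM⟩ := eventually_atTop.mp (hbd.eventually_lt_const (half_pos hδ))
    obtain ⟨n₀, hn₀⟩ := eventually_atTop.mp (hσt.eventually_ge_atTop M)
    have hUsub : ∀ k, n₀ ≤ k → U ⊆ W (σ k) := by
      intro k hk
      apply aux_subset_of_disjoint_frontier hUpath.isConnected.isPreconnected (hWopen (σ k)) ?_
        ⟨0, h0U, h0 (σ k)⟩
      rw [eq_empty_iff_forall_notMem]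
      rintro q ⟨hqU, hqfr⟩
      have h1 : hausdorffDist (frontier (W (σ k))) (frontier W₀) < δ / 2 := hM _ (hn₀ k hk)
      have h2 : infDist q (frontier W₀) ≤ hausdorffDist (frontier (W (σ k))) (frontier W₀) :=
        infDist_le_hausdorffDist_of_mem hqfr (hedist (σ k))
      obtain ⟨p, hpfr, hpq⟩ := (infDist_lt_iff hfr₀ne).mp (h2.trans_lt h1)
      have hpW₀ : p ∈ W₀ := hUdist q hqU (by rw [Metric.mem_ball, dist_comm]; exact hpq)
      rw [hW₀open.frontier_eq] at hpfr
      exact hpfr.2 hpW₀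
    have hUT : U ⊆ interior (⋂ k, ⋂ (_ : n₀ ≤ k), W (σ k)) :=
      interior_maximal (subset_iInter₂ fun k hk => hUsub k hk) hUopen
    exact mem_iUnion.mpr ⟨n₀, hUpath.isConnected.isPreconnected.subset_connectedComponentIn h0U hUT hzU⟩
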